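/- arXiv:1104.2671 — 3 statements merged into one kernel-verified Lean document; each statement's English description precedes it below -/
import Mathlib

section
/- Let (γ_j)_{j=1}^n be real numbers with γ_{j+1} − γ_j ≥ 1 for all j. Then there is an absolute constant c such that for every interval I ⊂ ℝ and every finite sequence (α_j) ⊂ ℂ, ∫_I |∑_j α_j e^{2πi γ_j y}|² dy ≤ c · max(|I|, 1) · ∑_j |α_j|². -/
open Finset MeasureTheory Real Complex

lemma gauss_int (s μ : ℝ) :
    (∫ y : ℝ, Complex.exp (-(π:ℂ) * ((y:ℂ) - s)^2 + 2*π*I*μ*y))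
      = Complex.exp (2*π*I*μ*s - π*μ^2) := by
  have hπ : (π:ℂ) ≠ 0 := Complex.ofReal_ne_zero.mpr Real.pi_ne_zero
  have h : ∀ y : ℝ, -(π:ℂ) * ((y:ℂ) - s)^2 + 2*π*I*μ*y
      = -(π:ℂ) * (y:ℂ)^2 + (2*π*(s:ℂ) + 2*π*I*μ)*y + (-(π:ℂ)*(s:ℂ)^2) := by
    intro y; ring
  simp_rw [h]
  rw [integral_cexp_quadratic (by simp [Real.pi_pos] : (-(π:ℂ)).re < 0)]
  have h1 : ((π:ℂ) / -(-(π:ℂ))) = 1 := by field_simp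
  rw [h1, Complex.one_cpow, one_mul]
  congr 1
  field_simp
  ring_nf
  rw [Complex.I_sq]
  ring

lemma gauss_integrable (s μ : ℝ) :
    Integrable (fun y : ℝ => Complex.exp (-(π:ℂ) * ((y:ℂ) - s)^2 + 2*π*I*μ*y)) := by
  have h : ∀ y : ℝ, -(π:ℂ) * ((y:ℂ) - s)^2 + 2*π*I*μ*y
      = -(π:ℂ) * (y:ℂ)^2 + (2*π*(s:ℂ) + 2*π*I*μ)*y + (-(π:ℂ)*(s:ℂ)^2) := by
    intro y; ring
  simp_rw [h]
  exact integrable_cexp_quadratic (by simp [Real.pi_pos]) _ _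

lemma gap_step {n : ℕ} (γ : Fin n → ℝ)
    (hγ : ∀ (j : ℕ) (hj : j + 1 < n), γ ⟨j + 1, hj⟩ - γ ⟨j, Nat.lt_of_succ_lt hj⟩ ≥ 1) :
    ∀ (d j : ℕ) (h : j + d < n), (d : ℝ) ≤ γ ⟨j + d, h⟩ - γ ⟨j, by omega⟩ := by
  intro d
  induction d with
  | zero => intro j h; simp
  | succ d ih =>
    intro j h
    have h1 : j + d + 1 < n := by omega
    have h2 := hγ (j + d) h1
    have h3 := ih j (by omega)
    push_cast
    have : (⟨j + (d+1), h⟩ : Fin n) = ⟨j + d + 1, h1⟩ := by simp [Nat.add_assoc]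
    rw [this]
    linarith

lemma gap_abs {n : ℕ} (γ : Fin n → ℝ)
    (hγ : ∀ (j : ℕ) (hj : j + 1 < n), γ ⟨j + 1, hj⟩ - γ ⟨j, Nat.lt_of_succ_lt hj⟩ ≥ 1)
    (j k : Fin n) :
    ((((j:ℤ) - (k:ℤ)).natAbs : ℝ)) ≤ |γ j - γ k| := by
  rcases le_total (k:ℕ) (j:ℕ) with hle | hle
  · have h := gap_step γ hγ ((j:ℕ) - (k:ℕ)) (k:ℕ) (by omega)
    have hj' : (⟨(k:ℕ) + ((j:ℕ) - (k:ℕ)), by omega⟩ : Fin n) = j := by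
      ext; simp; omega
    have hk' : (⟨(k:ℕ), by omega⟩ : Fin n) = k := by ext; simp
    rw [hj', hk'] at h
    have : (((j:ℤ) - (k:ℤ)).natAbs : ℝ) = (((j:ℕ) - (k:ℕ) : ℕ) : ℝ) := by
      congr 1; omega
    rw [this]
    calc (((j:ℕ) - (k:ℕ) : ℕ) : ℝ) ≤ γ j - γ k := h
      _ ≤ |γ j - γ k| := le_abs_self _
  · have h := gap_step γ hγ ((k:ℕ) - (j:ℕ)) (j:ℕ) (by omega)
    have hk' : (⟨(j:ℕ) + ((k:ℕ) - (j:ℕ)), by omega⟩ : Fin n) = k := by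
      ext; simp; omega
    have hj' : (⟨(j:ℕ), by omega⟩ : Fin n) = j := by ext; simp
    rw [hk', hj'] at h
    have : (((j:ℤ) - (k:ℤ)).natAbs : ℝ) = (((k:ℕ) - (j:ℕ) : ℕ) : ℝ) := by
      congr 1; omega
    rw [this]
    calc (((k:ℕ) - (j:ℕ) : ℕ) : ℝ) ≤ γ k - γ j := h
      _ ≤ |γ j - γ k| := by rw [abs_sub_comm]; exact le_abs_self _

lemma geom_row_sum {n : ℕ} (r : ℝ) (hr0 : 0 ≤ r) (hr1 : r < 1) (j : Fin n) :
    ∑ k : Fin n, r ^ (((j:ℤ) - (k:ℤ)).natAbs) ≤ 2 / (1 - r) := by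
  have h1r : (0:ℝ) < 1 - r := by linarith
  have hgeom : ∀ m : ℕ, ∑ i ∈ Finset.range m, r ^ i ≤ 1 / (1 - r) := by
    intro m
    rw [le_div_iff₀ h1r]
    have h := geom_sum_mul r m
    nlinarith [pow_nonneg hr0 m]
  have key : ∀ (A : Finset (Fin n)) (f : Fin n → ℕ),
      (Set.InjOn f A) → (∀ k ∈ A, f k < n) →
      (∀ k ∈ A, (((j:ℤ) - (k:ℤ)).natAbs) = f k) →
      ∑ k ∈ A, r ^ (((j:ℤ) - (k:ℤ)).natAbs) ≤ 1 / (1 - r) := by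
    intro A f hinj hlt heq
    calc ∑ k ∈ A, r ^ (((j:ℤ) - (k:ℤ)).natAbs) = ∑ k ∈ A, r ^ (f k) := by
          exact Finset.sum_congr rfl fun k hk => by rw [heq k hk]
      _ = ∑ i ∈ A.image f, r ^ i := by
          rw [Finset.sum_image (fun x hx y hy h => hinj hx hy h)]
      _ ≤ ∑ i ∈ Finset.range n, r ^ i := by
          apply Finset.sum_le_sum_of_subset_of_nonneg
          · intro i hi
            simp only [Finset.mem_image] at hi
            obtain ⟨k, hk, rfl⟩ := hi
            exact Finset.mem_range.mpr (hlt k hk)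
          · intros; positivity
      _ ≤ 1 / (1 - r) := hgeom n
  have hsplit : (Finset.univ : Finset (Fin n)) =
      Finset.univ.filter (fun k : Fin n => (k:ℕ) ≤ (j:ℕ)) ∪
      Finset.univ.filter (fun k : Fin n => (j:ℕ) < (k:ℕ)) := by
    ext k; simp [le_or_gt]
  rw [hsplit, Finset.sum_union]
  · have hA := key (Finset.univ.filter (fun k : Fin n => (k:ℕ) ≤ (j:ℕ)))
      (fun k => (j:ℕ) - (k:ℕ))
      (fun x hx y hy h => by
        simp only [Finset.mem_coe, Finset.mem_filter] at hx hy
        simp only [] at h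
        ext; omega)
      (fun k hk => by have := j.isLt; omega)
      (fun k hk => by
        simp only [Finset.mem_filter] at hk
        omega)
    have hB := key (Finset.univ.filter (fun k : Fin n => (j:ℕ) < (k:ℕ)))
      (fun k => (k:ℕ) - (j:ℕ))
      (fun x hx y hy h => by
        simp only [Finset.mem_coe, Finset.mem_filter] at hx hy
        simp only [] at h
        ext; omega)
      (fun k hk => by have := k.isLt; simp only [Finset.mem_filter] at hk; omega)
      (fun k hk => by
        simp only [Finset.mem_filter] at hk
        omega)
    calc _ ≤ 1 / (1-r) + 1/(1-r) := add_le_add hA hB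
      _ = 2 / (1 - r) := by ring
  · rw [Finset.disjoint_filter]
    intro k _ h; omega

lemma unit_bound {n : ℕ} (γ : Fin n → ℝ)
    (hγ : ∀ (j : ℕ) (hj : j + 1 < n), γ ⟨j + 1, hj⟩ - γ ⟨j, Nat.lt_of_succ_lt hj⟩ ≥ 1)
    (α : Fin n → ℂ) (t : ℝ) :
    (∫ y in t..(t+1), ‖∑ j, α j * Complex.exp (2 * Real.pi * Complex.I * (γ j) * y)‖ ^ 2)
      ≤ (4 * Real.exp (π/4)) * ∑ j, ‖α j‖ ^ 2 := by
  set S : ℝ → ℂ := fun y => ∑ j, α j * Complex.exp (2 * Real.pi * Complex.I * (γ j) * y)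
    with hS
  set s : ℝ := t + 1/2 with hs
  set g : ℝ → ℝ := fun y => Real.exp (-π * (y - s)^2) * ‖S y‖^2 with hg
  have hScont : Continuous S := by fun_prop
  have hgcont : Continuous g := by fun_prop
  -- norm bound on S
  have hSbd : ∀ y : ℝ, ‖S y‖ ≤ ∑ j, ‖α j‖ := by
    intro y
    refine (norm_sum_le _ _).trans (le_of_eq (Finset.sum_congr rfl fun j _ => ?_))
    rw [norm_mul]
    have : ‖Complex.exp (2 * Real.pi * Complex.I * (γ j) * y)‖ = 1 := by
      rw [Complex.norm_exp]
      have : ((2 * Real.pi * Complex.I * (γ j) * y : ℂ)).re = 0 := by simp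
      rw [this, Real.exp_zero]
    rw [this, mul_one]
  -- integrability of g on ℝ
  have hgint : Integrable g := by
    refine Integrable.mono' (g := fun y => (∑ j, ‖α j‖)^2 * Real.exp (-π * (y - s)^2)) ?_
      hgcont.aestronglyMeasurable (Filter.Eventually.of_forall fun y => ?_)
    · exact (((integrable_exp_neg_mul_sq Real.pi_pos).comp_sub_right s)).const_mul _
    · have h1 : 0 ≤ g y := by positivity
      rw [Real.norm_of_nonneg h1, hg]
      have h2 : ‖S y‖^2 ≤ (∑ j, ‖α j‖)^2 := by
        apply pow_le_pow_left₀ (norm_nonneg _) (hSbd y)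
      calc Real.exp (-π * (y - s)^2) * ‖S y‖^2
          ≤ Real.exp (-π * (y - s)^2) * (∑ j, ‖α j‖)^2 :=
            mul_le_mul_of_nonneg_left h2 (Real.exp_nonneg _)
        _ = (∑ j, ‖α j‖)^2 * Real.exp (-π * (y - s)^2) := by ring
  -- step 1: pointwise domination on [t, t+1]
  have step1 : (∫ y in t..(t+1), ‖S y‖ ^ 2)
      ≤ ∫ y in t..(t+1), Real.exp (π/4) * g y := by
    apply intervalIntegral.integral_mono_on (by linarith)
    · exact (by fun_prop : Continuous fun y => ‖S y‖^2).intervalIntegrable _ _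
    · exact (continuous_const.mul hgcont).intervalIntegrable _ _
    · intro y hy
      obtain ⟨hy1, hy2⟩ := hy
      have hsq : (y - s)^2 ≤ 1/4 := by rw [hs]; nlinarith
      have h1 : (1:ℝ) ≤ Real.exp (π/4) * Real.exp (-π * (y - s)^2) := by
        rw [← Real.exp_add]
        apply Real.one_le_exp
        nlinarith [Real.pi_pos]
      calc ‖S y‖^2 = 1 * ‖S y‖^2 := (one_mul _).symm
        _ ≤ (Real.exp (π/4) * Real.exp (-π * (y - s)^2)) * ‖S y‖^2 :=
            mul_le_mul_of_nonneg_right h1 (by positivity)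
        _ = Real.exp (π/4) * g y := by rw [hg]; ring
  -- step 2: extend to ℝ
  have step2 : (∫ y in t..(t+1), g y) ≤ ∫ y : ℝ, g y := by
    rw [intervalIntegral.integral_of_le (by linarith)]
    exact setIntegral_le_integral hgint
      (Filter.Eventually.of_forall fun y => by positivity)
  -- step 3: the Gaussian-weighted bound
  have key : (∫ y : ℝ, g y) ≤ 4 * ∑ j, ‖α j‖ ^ 2 := by
    -- pointwise expansion of the complexified integrand
    have hexp : ∀ y : ℝ, ((g y : ℝ) : ℂ) = ∑ j, ∑ k, α j * (starRingEnd ℂ) (α k)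
        * Complex.exp (-(π:ℂ) * ((y:ℂ) - s)^2 + 2*π*I*((γ j - γ k : ℝ):ℂ)*y) := by
      intro y
      have hconj : (starRingEnd ℂ) (S y)
          = ∑ k, (starRingEnd ℂ) (α k)
            * Complex.exp (-(2 * Real.pi * Complex.I * (γ k) * y : ℂ)) := by
        rw [hS, map_sum]
        refine Finset.sum_congr rfl fun k _ => ?_
        rw [map_mul, ← Complex.exp_conj]
        congr 1
        simp only [map_mul, map_ofNat, Complex.conj_I, Complex.conj_ofReal]
        ring
      have habs : ((‖S y‖^2 : ℝ) : ℂ) = S y * (starRingEnd ℂ) (S y) := by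
        rw [Complex.mul_conj]
        norm_cast
        rw [Complex.normSq_eq_norm_sq]
      calc ((g y : ℝ) : ℂ)
          = Complex.exp (-(π:ℂ) * ((y:ℂ) - s)^2) * (S y * (starRingEnd ℂ) (S y)) := by
            rw [hg, Complex.ofReal_mul, habs, Complex.ofReal_exp]
            congr 2
            push_cast
            ring
        _ = ∑ j, ∑ k, (α j * Complex.exp (2 * Real.pi * Complex.I * (γ j) * y))
              * ((starRingEnd ℂ) (α k)
                * Complex.exp (-(2 * Real.pi * Complex.I * (γ k) * y : ℂ)))
              * Complex.exp (-(π:ℂ) * ((y:ℂ) - s)^2) := by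
            rw [hconj, hS]
            rw [Finset.sum_mul_sum]
            rw [Finset.mul_sum]
            refine Finset.sum_congr rfl fun j _ => ?_
            rw [Finset.mul_sum]
            refine Finset.sum_congr rfl fun k _ => ?_
            ring
        _ = _ := by
            refine Finset.sum_congr rfl fun j _ => Finset.sum_congr rfl fun k _ => ?_
            rw [show -(π:ℂ) * ((y:ℂ) - s)^2 + 2*π*I*((γ j - γ k : ℝ):ℂ)*y
                = (2 * Real.pi * Complex.I * (γ j) * y : ℂ)
                  + (-(2 * Real.pi * Complex.I * (γ k) * y : ℂ))
                  + (-(π:ℂ) * ((y:ℂ) - s)^2) from by push_cast; ring]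
            rw [Complex.exp_add, Complex.exp_add]
            ring
    have hTint : ∀ (j k : Fin n), Integrable (fun y : ℝ => α j * (starRingEnd ℂ) (α k)
        * Complex.exp (-(π:ℂ) * ((y:ℂ) - s)^2 + 2*π*I*((γ j - γ k : ℝ):ℂ)*y)) :=
      fun j k => (gauss_integrable s (γ j - γ k)).const_mul _
    have hInt : (∫ y : ℝ, ((g y : ℝ) : ℂ)) = ∑ j, ∑ k, α j * (starRingEnd ℂ) (α k)
        * Complex.exp (2*π*I*((γ j - γ k : ℝ):ℂ)*s - π*((γ j - γ k : ℝ):ℂ)^2) := by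
      simp_rw [hexp]
      rw [integral_finset_sum _ (fun j _ => integrable_finset_sum _ (fun k _ => hTint j k))]
      refine Finset.sum_congr rfl fun j _ => ?_
      rw [integral_finset_sum _ (fun k _ => hTint j k)]
      refine Finset.sum_congr rfl fun k _ => ?_
      rw [MeasureTheory.integral_const_mul, gauss_int s (γ j - γ k)]
    have hre : (∫ y : ℝ, g y) = (∫ y : ℝ, ((g y : ℝ) : ℂ)).re := by
      have h : (∫ y : ℝ, ((g y : ℝ) : ℂ)) = (((∫ y : ℝ, g y) : ℝ) : ℂ) :=
        integral_ofReal (𝕜 := ℂ) (f := g) (μ := (volume : Measure ℝ))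
      rw [h, Complex.ofReal_re]
    -- the weight and its bounds
    set r : ℝ := Real.exp (-π) with hr
    have hr0 : 0 ≤ r := Real.exp_nonneg _
    have hr1 : r < 1 := Real.exp_lt_one_iff.mpr (by linarith [Real.pi_pos])
    have hrhalf : r ≤ 1/2 := by
      have h2 : (2:ℝ) ≤ Real.exp 1 := by have := Real.add_one_le_exp 1; linarith
      have h3 : Real.exp (-π) ≤ Real.exp (-1) :=
        Real.exp_le_exp.mpr (by linarith [Real.pi_gt_three])
      have h4 : Real.exp (-1) * Real.exp 1 = 1 := by rw [← Real.exp_add]; norm_num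
      nlinarith [Real.exp_pos 1, Real.exp_pos (-1)]
    have hw : ∀ j k : Fin n, Real.exp (-π * (γ j - γ k)^2)
        ≤ r ^ (((j:ℤ) - (k:ℤ)).natAbs) := by
      intro j k
      set m : ℕ := ((j:ℤ) - (k:ℤ)).natAbs with hm
      have hd := gap_abs γ hγ j k
      have hm1 : (m:ℝ) ≤ (m:ℝ)^2 := by
        have : m ≤ m^2 := Nat.le_self_pow (by norm_num) m
        exact_mod_cast this
      have hm2 : (m:ℝ)^2 ≤ (γ j - γ k)^2 := by
        rw [← _root_.sq_abs (γ j - γ k)]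
        exact pow_le_pow_left₀ (Nat.cast_nonneg m) hd 2
      rw [hr, ← Real.exp_nat_mul]
      apply Real.exp_le_exp.mpr
      nlinarith [Real.pi_pos]
    have hrow : ∀ j : Fin n, ∑ k, Real.exp (-π * (γ j - γ k)^2) ≤ 4 := by
      intro j
      calc ∑ k, Real.exp (-π * (γ j - γ k)^2)
          ≤ ∑ k : Fin n, r ^ (((j:ℤ) - (k:ℤ)).natAbs) := Finset.sum_le_sum fun k _ => hw j k
        _ ≤ 2 / (1 - r) := geom_row_sum r hr0 hr1 j
        _ ≤ 4 := by rw [div_le_iff₀ (by linarith)]; linarith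
    have hcol : ∀ k : Fin n, ∑ j, Real.exp (-π * (γ j - γ k)^2) ≤ 4 := by
      intro k
      calc ∑ j, Real.exp (-π * (γ j - γ k)^2)
          = ∑ j, Real.exp (-π * (γ k - γ j)^2) := by
            refine Finset.sum_congr rfl fun j _ => by rw [show (γ j - γ k)^2 = (γ k - γ j)^2 by ring]
        _ ≤ 4 := hrow k
    -- put it together
    rw [hre, hInt]
    calc (∑ j, ∑ k, α j * (starRingEnd ℂ) (α k)
          * Complex.exp (2*π*I*((γ j - γ k : ℝ):ℂ)*s - π*((γ j - γ k : ℝ):ℂ)^2)).re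
        ≤ ‖∑ j, ∑ k, α j * (starRingEnd ℂ) (α k)
          * Complex.exp (2*π*I*((γ j - γ k : ℝ):ℂ)*s - π*((γ j - γ k : ℝ):ℂ)^2)‖ := by
          exact Complex.re_le_norm _
      _ ≤ ∑ j, ∑ k, ‖α j‖ * ‖α k‖ * Real.exp (-π * (γ j - γ k)^2) := by
          refine (norm_sum_le _ _).trans (Finset.sum_le_sum fun j _ => ?_)
          refine (norm_sum_le _ _).trans (Finset.sum_le_sum fun k _ => ?_)
          rw [norm_mul, norm_mul]
          have h1 : ‖(starRingEnd ℂ) (α k)‖ = ‖α k‖ := RCLike.norm_conj _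
          have h2 : ‖Complex.exp (2*π*I*((γ j - γ k : ℝ):ℂ)*s - π*((γ j - γ k : ℝ):ℂ)^2)‖
              = Real.exp (-π * (γ j - γ k)^2) := by
            have hz : (2*(π:ℂ)*I*((γ j - γ k : ℝ):ℂ)*s - π*((γ j - γ k : ℝ):ℂ)^2)
                = ((-π * (γ j - γ k)^2 : ℝ) : ℂ) + ((2*π*(γ j - γ k)*s : ℝ) : ℂ) * I := by
              push_cast; ring
            have hre2 : (((-π * (γ j - γ k)^2 : ℝ) : ℂ)
                + ((2*π*(γ j - γ k)*s : ℝ) : ℂ) * I).re = -π * (γ j - γ k)^2 := by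
              simp only [Complex.add_re, Complex.mul_re, Complex.I_re, Complex.I_im,
                Complex.ofReal_re, Complex.ofReal_im]
              ring
            rw [hz, Complex.norm_exp, hre2]
          rw [h1, h2]
      _ ≤ ∑ j, ∑ k, ((‖α j‖^2 + ‖α k‖^2)/2) * Real.exp (-π * (γ j - γ k)^2) := by
          refine Finset.sum_le_sum fun j _ => Finset.sum_le_sum fun k _ => ?_
          apply mul_le_mul_of_nonneg_right _ (Real.exp_nonneg _)
          nlinarith [sq_nonneg (‖α j‖ - ‖α k‖)]
      _ = (∑ j, ∑ k, ‖α j‖^2 * Real.exp (-π * (γ j - γ k)^2)) / 2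
          + (∑ j, ∑ k, ‖α k‖^2 * Real.exp (-π * (γ j - γ k)^2)) / 2 := by
          have e1 : ∀ j k : Fin n, ((‖α j‖^2 + ‖α k‖^2)/2) * Real.exp (-π * (γ j - γ k)^2)
              = ‖α j‖^2 * Real.exp (-π * (γ j - γ k)^2) / 2
                + ‖α k‖^2 * Real.exp (-π * (γ j - γ k)^2) / 2 := by
            intros; ring
          simp_rw [e1, Finset.sum_add_distrib, Finset.sum_div]
      _ ≤ (∑ j, ‖α j‖^2 * 4) / 2 + (∑ k, ‖α k‖^2 * 4) / 2 := by
          gcongr ?_ / 2 + ?_ / 2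
          · refine Finset.sum_le_sum fun j _ => ?_
            have : ∑ k : Fin n, ‖α j‖^2 * Real.exp (-π * (γ j - γ k)^2)
                = ‖α j‖^2 * ∑ k : Fin n, Real.exp (-π * (γ j - γ k)^2) := by
              rw [Finset.mul_sum]
            rw [this]
            exact mul_le_mul_of_nonneg_left (hrow j) (by positivity)
          · rw [Finset.sum_comm]
            refine Finset.sum_le_sum fun k _ => ?_
            have : ∑ j : Fin n, ‖α k‖^2 * Real.exp (-π * (γ j - γ k)^2)
                = ‖α k‖^2 * ∑ j : Fin n, Real.exp (-π * (γ j - γ k)^2) := by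
              rw [Finset.mul_sum]
            rw [this]
            exact mul_le_mul_of_nonneg_left (hcol k) (by positivity)
      _ = 4 * ∑ j, ‖α j‖ ^ 2 := by
          rw [← Finset.sum_mul]
          ring
  have hexp4 : (0:ℝ) < Real.exp (π/4) := Real.exp_pos _
  calc (∫ y in t..(t+1), ‖S y‖ ^ 2)
      ≤ ∫ y in t..(t+1), Real.exp (π/4) * g y := step1
    _ = Real.exp (π/4) * ∫ y in t..(t+1), g y := by
        rw [intervalIntegral.integral_const_mul]
    _ ≤ Real.exp (π/4) * ∫ y : ℝ, g y := by
        exact mul_le_mul_of_nonneg_left step2 hexp4.le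
    _ ≤ Real.exp (π/4) * (4 * ∑ j, ‖α j‖ ^ 2) := mul_le_mul_of_nonneg_left key hexp4.le
    _ = (4 * Real.exp (π/4)) * ∑ j, ‖α j‖ ^ 2 := by ring

/-- Zygmund's inequality on Dirichlet series with gaps: if the real frequencies `γ_j`
satisfy `γ_{j+1} - γ_j ≥ 1`, then for every interval `[a,b]` and complex coefficients
`α_j`, `∫_a^b |∑ α_j e^{2πi γ_j y}|² dy ≤ c · max(b-a, 1) · ∑ |α_j|²` with an absolute
constant `c`. -/
theorem dirichlet_gap_inequality :
    ∃ c : ℝ, 0 < c ∧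
      ∀ (n : ℕ) (γ : Fin n → ℝ),
        (∀ (j : ℕ) (hj : j + 1 < n), γ ⟨j + 1, hj⟩ - γ ⟨j, Nat.lt_of_succ_lt hj⟩ ≥ 1) →
        ∀ (a b : ℝ), a ≤ b → ∀ α : Fin n → ℂ,
          (∫ y in a..b, ‖∑ j, α j * Complex.exp (2 * Real.pi * Complex.I * (γ j) * y)‖ ^ 2)
            ≤ c * max (b - a) 1 * ∑ j, ‖α j‖ ^ 2 := by
  refine ⟨8 * Real.exp (π/4), by positivity, ?_⟩
  intro n γ hγ a b hab α
  set f : ℝ → ℝ :=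
    fun y => ‖∑ j, α j * Complex.exp (2 * Real.pi * Complex.I * (γ j) * y)‖ ^ 2 with hf
  have hfc : Continuous f := by fun_prop
  have hf0 : ∀ y, 0 ≤ f y := fun y => by positivity
  have hA : 0 ≤ ∑ j, ‖α j‖^2 := Finset.sum_nonneg fun j _ => by positivity
  set N : ℕ := ⌈b - a⌉₊ with hN
  have hbN : b ≤ a + N := by
    have := Nat.le_ceil (b - a); rw [← hN] at this; linarith
  set u : ℕ → ℝ := fun i => a + i with hu
  have hint : ∀ (x y : ℝ), IntervalIntegrable f volume x y :=
    fun x y => hfc.intervalIntegrable x y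
  have h1 : (∫ y in a..b, f y) ≤ ∫ y in a..(a + (N:ℝ)), f y := by
    have heq := intervalIntegral.integral_add_adjacent_intervals
      (hint a b) (hint b (a + (N:ℝ)))
    have h2 : 0 ≤ ∫ y in b..(a + (N:ℝ)), f y :=
      intervalIntegral.integral_nonneg hbN (fun y _ => hf0 y)
    linarith
  have h3 : (∫ y in a..(a + (N:ℝ)), f y)
      = ∑ i ∈ Finset.range N, ∫ y in (u i)..(u (i+1)), f y := by
    rw [intervalIntegral.sum_integral_adjacent_intervals (fun k _ => hint _ _)]
    rw [hu]
    norm_num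
  have h4 : ∀ i : ℕ, (∫ y in (u i)..(u (i+1)), f y)
      ≤ (4 * Real.exp (π/4)) * ∑ j, ‖α j‖ ^ 2 := by
    intro i
    have hu1 : u (i+1) = (u i) + 1 := by rw [hu]; push_cast; ring
    rw [hu1]
    exact unit_bound γ hγ α (u i)
  have h5 : (∫ y in a..b, f y) ≤ (N:ℝ) * ((4 * Real.exp (π/4)) * ∑ j, ‖α j‖ ^ 2) := by
    calc (∫ y in a..b, f y) ≤ ∫ y in a..(a + (N:ℝ)), f y := h1
      _ = ∑ i ∈ Finset.range N, ∫ y in (u i)..(u (i+1)), f y := h3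
      _ ≤ ∑ i ∈ Finset.range N, (4 * Real.exp (π/4)) * ∑ j, ‖α j‖ ^ 2 :=
          Finset.sum_le_sum fun i _ => h4 i
      _ = (N:ℝ) * ((4 * Real.exp (π/4)) * ∑ j, ‖α j‖ ^ 2) := by
          rw [Finset.sum_const, Finset.card_range, nsmul_eq_mul]
  have hN2 : (N:ℝ) ≤ 2 * max (b-a) 1 := by
    have h6 : (N:ℝ) < (b-a) + 1 := by
      rw [hN]; exact Nat.ceil_lt_add_one (sub_nonneg.mpr hab)
    have h7 : b - a ≤ max (b-a) 1 := le_max_left _ _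
    have h8 : (1:ℝ) ≤ max (b-a) 1 := le_max_right _ _
    linarith
  calc (∫ y in a..b, f y) ≤ (N:ℝ) * ((4 * Real.exp (π/4)) * ∑ j, ‖α j‖ ^ 2) := h5
    _ ≤ (2 * max (b-a) 1) * ((4 * Real.exp (π/4)) * ∑ j, ‖α j‖ ^ 2) := by
        apply mul_le_mul_of_nonneg_right hN2 (by positivity)
    _ = 8 * Real.exp (π/4) * max (b - a) 1 * ∑ j, ‖α j‖ ^ 2 := by ring
end

section
/- Let (I_j)_{j≥1} be pairwise disjoint intervals in ℝ, each of length ≥ 4, and for each j let (I_{j,k})_{k=1}^{n_j} be the dyadic subintervals of the left half of I_j defined by I_{j,k} = (a_j − 2 + 2^k, a_j − 2 + 2^{k+1}] ∩ (a_j, (a_j+b_j)/2], where I_j = (a_j, b_j]. Then the collection (I_{j,k})_{j,k} is well-distributed: there is an absolute constant d such that each doubled interval 2I_{j,k} intersects at most d other doubled intervals 2I_{j',k'} of the collection. -/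
open Set

/-- The doubled interval `2I` of `(u, v]`: same centre, twice the length. -/
def doubledIoc (u v : ℝ) : Set ℝ :=
  Ioc ((u + v) / 2 - (v - u)) ((u + v) / 2 + (v - u))

/-- The dyadic subintervals `I_{j,k}` of the left halves of a pairwise disjoint family of
intervals `I_j = (a_j, b_j]` (each of length `≥ 4`) form a well-distributed collection:
there is an absolute constant `d` such that each doubled interval `2I_{j,k}` meets at
most `d` other doubled intervals of the collection. -/
theorem dyadic_collection_well_distributed :
    ∃ d : ℕ, ∀ (a b : ℕ → ℝ),
      (Pairwise fun j j' => Disjoint (Ioc (a j) (b j)) (Ioc (a j') (b j'))) →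
      (∀ j, b j - a j ≥ 4) →
      ∀ n : ℕ → ℕ,
        (∀ j, (2 : ℝ) ^ (n j + 1) ≤ b j - a j + 4) →
        (∀ j, ∀ m : ℕ, (2 : ℝ) ^ (m + 1) ≤ b j - a j + 4 → m ≤ n j) →
        -- endpoints of the subinterval `I_{j,k}`
        ∀ lo hi : ℕ → ℕ → ℝ,
          (∀ j k, lo j k = a j - 2 + 2 ^ k) →
          (∀ j k, hi j k = min (a j - 2 + 2 ^ (k + 1)) ((a j + b j) / 2)) →
          ∀ (j : ℕ) (k : ℕ), 1 ≤ k → k ≤ n j →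
            ({ p : ℕ × ℕ | p ≠ (j, k) ∧ 1 ≤ p.2 ∧ p.2 ≤ n p.1 ∧
                (doubledIoc (lo p.1 p.2) (hi p.1 p.2) ∩
                  doubledIoc (lo j k) (hi j k)).Nonempty }).Finite ∧
            ({ p : ℕ × ℕ | p ≠ (j, k) ∧ 1 ≤ p.2 ∧ p.2 ≤ n p.1 ∧
                (doubledIoc (lo p.1 p.2) (hi p.1 p.2) ∩
                  doubledIoc (lo j k) (hi j k)).Nonempty }).ncard ≤ d := by
  classical
  refine ⟨8, ?_⟩
  intro a b hdisj hlen n hn1 hn2 lo hi hlo hhi j k hk1 hk2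
  have hone : ∀ m : ℕ, (1:ℝ) ≤ 2^m := fun m => one_le_pow₀ one_le_two
  -- key bounds on points of doubled intervals
  have key : ∀ (j' k' : ℕ) (x : ℝ), 1 ≤ k' → k' ≤ n j' →
      x ∈ doubledIoc (lo j' k') (hi j' k') →
      a j' - 2 + 2^(k'-1) < x ∧ x ≤ a j' - 2 + 3 * 2^k' ∧
        x ≤ (a j' + b j')/2 + 2^(k'-1) ∧ x ≤ b j' := by
    intro j' k' x hk'1 hk'2 hx
    simp only [doubledIoc, hlo, hhi, Set.mem_Ioc] at hx
    obtain ⟨hx1, hx2⟩ := hx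
    have hv1 : min (a j' - 2 + 2^(k'+1)) ((a j' + b j')/2) ≤ a j' - 2 + 2^(k'+1) :=
      min_le_left _ _
    have hv2 : min (a j' - 2 + 2^(k'+1)) ((a j' + b j')/2) ≤ (a j' + b j')/2 :=
      min_le_right _ _
    have hA : (2:ℝ)^(k'-1) * 2 = 2^k' := by
      rw [← pow_succ, Nat.sub_add_cancel hk'1]
    have hB : (2:ℝ)^(k'+1) = 2^k' * 2 := pow_succ 2 k'
    have hC : (2:ℝ)^(k'+1) ≤ 2^(n j' + 1) :=
      pow_le_pow_right₀ one_le_two (by omega)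
    have hD := hn1 j'
    have hE := hlen j'
    have h1 : (1:ℝ) ≤ 2^(k'-1) := hone _
    refine ⟨by linarith, by linarith, by linarith, by linarith⟩
  -- at most one interval ends just below `a j`
  have common : ∀ i i' (x : ℝ), x ∈ Ioc (a i) (b i) → x ∈ Ioc (a i') (b i') → i = i' := by
    intro i i' x h h'
    by_contra hne
    exact (Set.disjoint_left.mp (hdisj hne) h) h'
  obtain ⟨j₁, hj₁⟩ : ∃ j₁, ∀ i, a j - 1 < b i → b i ≤ a j → i = j₁ := by
    by_cases h : ∃ i, a j - 1 < b i ∧ b i ≤ a j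
    · obtain ⟨i₀, h1, h2⟩ := h
      refine ⟨i₀, fun i g1 g2 => common i i₀ (a j - 1) ?_ ?_⟩
      · exact ⟨by linarith [hlen i], g1.le⟩
      · exact ⟨by linarith [hlen i₀], h1.le⟩
    · exact ⟨j, fun i g1 g2 => absurd ⟨i, g1, g2⟩ h⟩
  -- at most one interval starts just above `b j`
  obtain ⟨j₂, hj₂⟩ : ∃ j₂, ∀ i, b j ≤ a i → a i < b j + 1 → i = j₂ := by
    by_cases h : ∃ i, b j ≤ a i ∧ a i < b j + 1
    · obtain ⟨i₀, h1, h2⟩ := h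
      refine ⟨i₀, fun i g1 g2 => common i i₀ (b j + 1) ?_ ?_⟩
      · exact ⟨g2, by linarith [hlen i]⟩
      · exact ⟨h2, by linarith [hlen i₀]⟩
    · exact ⟨j, fun i g1 g2 => absurd ⟨i, g1, g2⟩ h⟩
  have hsub : { p : ℕ × ℕ | p ≠ (j, k) ∧ 1 ≤ p.2 ∧ p.2 ≤ n p.1 ∧
                (doubledIoc (lo p.1 p.2) (hi p.1 p.2) ∩
                  doubledIoc (lo j k) (hi j k)).Nonempty } ⊆
      (↑({(j, k-2), (j, k-1), (j, k+1), (j, k+2), (j₁, n j₁ - 1), (j₁, n j₁), (j₂, 1)} :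
        Finset (ℕ × ℕ)) : Set (ℕ × ℕ)) := by
    rintro ⟨j', k'⟩ ⟨hne, hk'1, hk'2, x, hx', hx⟩
    replace hk'1 : 1 ≤ k' := hk'1
    replace hk'2 : k' ≤ n j' := hk'2
    obtain ⟨K1, K2, K3, K4⟩ := key j' k' x hk'1 hk'2 hx'
    obtain ⟨L1, L2, L3, L4⟩ := key j k x hk1 hk2 hx
    have h1k' : (1:ℝ) ≤ 2^(k'-1) := hone _
    have h1k : (1:ℝ) ≤ 2^(k-1) := hone _
    have hA' : (2:ℝ)^(k'-1) * 2 = 2^k' := by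
      rw [← pow_succ, Nat.sub_add_cancel hk'1]
    have hA : (2:ℝ)^(k-1) * 2 = 2^k := by
      rw [← pow_succ, Nat.sub_add_cancel hk1]
    by_cases hjj : j' = j
    · subst hjj
      have hkk : k' ≠ k := by
        intro h; exact hne (by rw [h])
      have e1 : (2:ℝ)^k' < 2^(k+3) := by
        have h8 : (2:ℝ)^(k+3) = 8 * 2^k := by rw [pow_add]; ring
        have h0 : (0:ℝ) ≤ 2^k := by positivity
        linarith
      have e2 : (2:ℝ)^k < 2^(k'+3) := by
        have h8 : (2:ℝ)^(k'+3) = 8 * 2^k' := by rw [pow_add]; ring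
        have h0 : (0:ℝ) ≤ 2^k' := by positivity
        linarith
      have d1 : k' < k + 3 := (pow_lt_pow_iff_right₀ (by norm_num : (1:ℝ) < 2)).mp e1
      have d2 : k < k' + 3 := (pow_lt_pow_iff_right₀ (by norm_num : (1:ℝ) < 2)).mp e2
      simp only [Finset.coe_insert, Set.mem_insert_iff, Finset.coe_singleton,
        Set.mem_singleton_iff, Prod.mk.injEq, true_and, and_true]
      omega
    · have hd := hdisj hjj
      have hsep : b j' ≤ a j ∨ b j ≤ a j' := by
        have h := Set.Ioc_disjoint_Ioc.mp hd
        rcases le_max_iff.mp h with h | h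
        · rcases min_le_iff.mp h with h | h
          · exact absurd h (by linarith [hlen j'])
          · exact Or.inr h
        · rcases min_le_iff.mp h with h | h
          · exact Or.inl h
          · exact absurd h (by linarith [hlen j])
      rcases hsep with hsep | hsep
      · -- j' lies below j
        have hb1 : a j - 1 < b j' := by linarith
        have hjeq : j' = j₁ := hj₁ j' hb1 hsep
        have hpn : (2:ℝ)^(n j' + 1) ≤ b j' - a j' + 4 := hn1 j'
        have hkn : n j' - 1 ≤ k' := by
          by_contra hcon
          push_neg at hcon
          have h3 : 3 ≤ n j' := by omega
          have hle : k' - 1 ≤ n j' - 3 := by omega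
          have hp1 : (2:ℝ)^(k'-1) ≤ 2^(n j' - 3) := pow_le_pow_right₀ one_le_two hle
          have hp2 : (2:ℝ)^(n j') = 8 * 2^(n j' - 3) := by
            have h := pow_add (2:ℝ) (n j' - 3) 3
            rw [show n j' - 3 + 3 = n j' by omega] at h
            rw [h]; ring
          have hp3 : (2:ℝ)^(n j' + 1) = 2 * 2^(n j') := by rw [pow_succ]; ring
          have h1 : (1:ℝ) ≤ 2^(n j' - 3) := hone _
          linarith
        subst hjeq
        simp only [Finset.coe_insert, Set.mem_insert_iff, Finset.coe_singleton,
          Set.mem_singleton_iff, Prod.mk.injEq, true_and, and_true]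
        omega
      · -- j' lies above j
        have hk'eq : k' = 1 := by
          have e1 : (2:ℝ)^(k'-1) < 2 := by linarith
          have e2 : (2:ℝ)^(k'-1) < 2^1 := by rw [pow_one]; exact e1
          have := (pow_lt_pow_iff_right₀ (by norm_num : (1:ℝ) < 2)).mp e2
          omega
        have hja : a j' < b j + 1 := by linarith
        have hjeq : j' = j₂ := hj₂ j' hsep hja
        subst hjeq
        simp only [Finset.coe_insert, Set.mem_insert_iff, Finset.coe_singleton,
          Set.mem_singleton_iff, Prod.mk.injEq, true_and, and_true]
        omega
  set F : Finset (ℕ × ℕ) :=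
    {(j, k-2), (j, k-1), (j, k+1), (j, k+2), (j₁, n j₁ - 1), (j₁, n j₁), (j₂, 1)} with hF
  have hcard : F.card ≤ 8 := by
    have c1 : ∀ (x : ℕ × ℕ) (s : Finset (ℕ × ℕ)) (m : ℕ),
        s.card ≤ m → (insert x s).card ≤ m + 1 :=
      fun x s m h => (Finset.card_insert_le _ _).trans (by omega)
    have : F.card ≤ 7 := by
      rw [hF]
      exact c1 _ _ _ (c1 _ _ _ (c1 _ _ _ (c1 _ _ _ (c1 _ _ _ (c1 _ _ _ (by simp))))))
    omega
  refine ⟨F.finite_toSet.subset hsub, ?_⟩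
  calc ({ p : ℕ × ℕ | p ≠ (j, k) ∧ 1 ≤ p.2 ∧ p.2 ≤ n p.1 ∧
                (doubledIoc (lo p.1 p.2) (hi p.1 p.2) ∩
                  doubledIoc (lo j k) (hi j k)).Nonempty }).ncard
      ≤ (↑F : Set (ℕ × ℕ)).ncard := Set.ncard_le_ncard hsub F.finite_toSet
    _ = F.card := Set.ncard_coe_finset F
    _ ≤ 8 := hcard
end

section
/- Fix the dyadic subintervals I_{j,k} = (a_{j,k}, a_{j,k+1}] of disjoint intervals I_j = (a_j, b_j] as in the LPR construction, and let c_{j,k} = a_{j,k} + 2^{k−1} = a_j − 2 + 2^k + 2^{k−1}. Then for each fixed k, the points c_{j,k} for distinct j satisfy |c_{j,k} − c_{j',k}| ≥ 2^k whenever j ≠ j' and both indices are defined (k ≤ min(n_j, n_{j'})). -/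
open Set

/-- The gap estimate (4.4): for pairwise disjoint intervals `I_j = (a_j, b_j]` of length
`≥ 4`, with `n_j` maximal such that `2^(n_j+1) ≤ b_j - a_j + 4`, the modulation centres
`c_{j,k} = a_j - 2 + 2^k + 2^(k-1)` satisfy `|c_{j,k} - c_{j',k}| ≥ 2^k` for `j ≠ j'`
and `1 ≤ k ≤ min(n_j, n_{j'})`. -/
theorem modulation_centres_gap (a b : ℕ → ℝ)
    (hdisj : Pairwise fun j j' => Disjoint (Ioc (a j) (b j)) (Ioc (a j') (b j')))
    (hlen : ∀ j, b j - a j ≥ 4)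
    (n : ℕ → ℕ)
    (hn : ∀ j, (2 : ℝ) ^ (n j + 1) ≤ b j - a j + 4)
    (hmax : ∀ j, ∀ m : ℕ, (2 : ℝ) ^ (m + 1) ≤ b j - a j + 4 → m ≤ n j)
    (c : ℕ → ℕ → ℝ) (hc : ∀ j k, c j k = a j - 2 + 2 ^ k + 2 ^ (k - 1)) :
    ∀ j j' k, j ≠ j' → 1 ≤ k → k ≤ n j → k ≤ n j' →
      |c j k - c j' k| ≥ 2 ^ k := by
  intro j j' k hne hk1 hkj hkj'
  have key : ∀ i, k ≤ n i → b i - a i ≥ 2 ^ k := by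
    intro i hki
    have h1 : (2 : ℝ) ^ (k + 1) ≤ 2 ^ (n i + 1) :=
      pow_le_pow_right₀ (by norm_num) (by omega)
    have h2 := (h1.trans (hn i))
    rcases Nat.lt_or_ge k 2 with hk | hk
    · interval_cases k
      · have := hlen i
        calc (2:ℝ)^1 = 2 := by norm_num
          _ ≤ 4 := by norm_num
          _ ≤ b i - a i := this
    · have h3 : (4 : ℝ) ≤ 2 ^ k := by
        calc (4:ℝ) = 2 ^ 2 := by norm_num
          _ ≤ 2 ^ k := pow_le_pow_right₀ (by norm_num) hk
      have : (2:ℝ) ^ (k+1) = 2 * 2 ^ k := by ring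
      nlinarith
  have hd := hdisj hne
  simp only [] at hd
  rw [Set.Ioc_disjoint_Ioc] at hd
  have hcc : c j k - c j' k = a j - a j' := by rw [hc, hc]; ring
  rw [hcc]
  have hj := key j hkj
  have hj' := key j' hkj'
  rcases min_le_iff.mp hd with h | h <;> rcases le_max_iff.mp h with h2 | h2
  · nlinarith [abs_nonneg (a j - a j'), le_abs_self (a j - a j'), neg_abs_le (a j - a j')]
  · rw [abs_sub_comm]; calc (2:ℝ)^k ≤ b j - a j := hj
      _ ≤ a j' - a j := by linarith
      _ ≤ |a j' - a j| := le_abs_self _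
  · calc (2:ℝ)^k ≤ b j' - a j' := hj'
      _ ≤ a j - a j' := by linarith
      _ ≤ |a j - a j'| := le_abs_self _
  · nlinarith [abs_nonneg (a j - a j'), le_abs_self (a j - a j'), neg_abs_le (a j - a j')]
end
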